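/- arXiv:2302.08671 — 12 statements merged into one kernel-verified Lean document; each statement's English description precedes it below -/
import Mathlib

section
/- Let V be a finite nonempty vertex type with decidable equality and let G₁ and G₂ be simple graphs on V with decidable adjacency, each of which has every vertex of positive degree and has no bipartite connected component. Let M₁ and M₂ denote the symmetrically normalized adjacency matrices of G₁ and G₂ respectively. Assume their fixed spaces differ, i.e. there exists x : V → ℝ such that exactly one of M₁ *ᵥ x = x and M₂ *ᵥ x = x holds. Then there exist matrices P₁, P₂ : Matrix V V ℝ such that M₁^k converges entrywise to P₁ and M₂^k converges entrywise to P₂ as k → ∞, and for every invertible matrix W : Matrix V V ℝ one has P₁ * W ≠ P₂ * W. -/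
open Matrix Filter

/-- The symmetrically normalized adjacency matrix `D^{-1/2} * A * D^{-1/2}` of a graph. -/
noncomputable def normAdj {V : Type} [Fintype V] [DecidableEq V]
    (G : SimpleGraph V) [DecidableRel G.Adj] : Matrix V V ℝ :=
  Matrix.diagonal (fun v => (G.degree v : ℝ) ^ (-(1/2 : ℝ))) * G.adjMatrix ℝ *
    Matrix.diagonal (fun v => (G.degree v : ℝ) ^ (-(1/2 : ℝ)))

/-- `G` has no bipartite connected component: for every connected component, the
subgraph induced on its vertex set is not 2-colorable. -/
def NoBipartiteComponent {V : Type} (G : SimpleGraph V) : Prop :=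
  ∀ c : G.ConnectedComponent, ¬ (G.induce c.supp).Colorable 2

set_option linter.unusedSectionVars false

variable {V : Type} [Fintype V] [DecidableEq V]

lemma normAdj_apply (G : SimpleGraph V) [DecidableRel G.Adj] (i j : V) :
    normAdj G i j = (G.degree i : ℝ) ^ (-(1/2 : ℝ)) *
      (if G.Adj i j then 1 else 0) * (G.degree j : ℝ) ^ (-(1/2 : ℝ)) := by
  simp only [normAdj, Matrix.mul_diagonal, Matrix.diagonal_mul, SimpleGraph.adjMatrix_apply]

lemma normAdj_isHermitian (G : SimpleGraph V) [DecidableRel G.Adj] :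
    (normAdj G).IsHermitian := by
  ext i j
  simp only [conjTranspose_apply, normAdj_apply, star_trivial]
  by_cases h : G.Adj i j
  · rw [if_pos h, if_pos (h.symm)]; ring
  · rw [if_neg h, if_neg (fun h' => h h'.symm)]; ring

section EigBound
variable {G : SimpleGraph V} [DecidableRel G.Adj]

lemma deg_pos_real (hdeg : ∀ v, 0 < G.degree v) (v : V) : (0:ℝ) < (G.degree v : ℝ) := by
  exact_mod_cast hdeg v

lemma ee_d (hdeg : ∀ v, 0 < G.degree v) (v : V) :
    (G.degree v : ℝ) ^ (-(1/2 : ℝ)) * (G.degree v : ℝ) ^ (-(1/2 : ℝ)) * (G.degree v : ℝ) = 1 := by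
  have hd := deg_pos_real hdeg v
  rw [← Real.rpow_add hd]
  norm_num
  rw [Real.rpow_neg_one]
  field_simp

lemma e_pos (hdeg : ∀ v, 0 < G.degree v) (v : V) :
    (0:ℝ) < (G.degree v : ℝ) ^ (-(1/2 : ℝ)) :=
  Real.rpow_pos_of_pos (deg_pos_real hdeg v) _

/-- sum over j of ite (Adj i j) c 0 equals degree * c -/
lemma sum_ite_adj (i : V) (c : ℝ) :
    ∑ j, (if G.Adj i j then c else 0) = (G.degree i : ℝ) * c := by
  rw [Finset.sum_ite, Finset.sum_const_zero, add_zero, Finset.sum_const,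
    ← SimpleGraph.neighborFinset_eq_filter]
  rw [SimpleGraph.degree, nsmul_eq_mul]

lemma walk_prop {f : V → ℝ} (hopp : ∀ i j, G.Adj i j → f i = - f j) {u w : V}
    (p : G.Walk u w) (hu : f u ≠ 0) : f w ≠ 0 := by
  induction p with
  | nil => exact hu
  | @cons a b w h p ih =>
    apply ih
    rw [hopp _ _ h] at hu
    simpa using hu

lemma eig_range (hdeg : ∀ v, 0 < G.degree v) (hbip : NoBipartiteComponent G)
    {μ : ℝ} {y : V → ℝ} (hy : y ≠ 0) (heq : normAdj G *ᵥ y = μ • y) :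
    -1 < μ ∧ μ ≤ 1 := by
  classical
  set g : V → ℝ := fun v => (G.degree v : ℝ) ^ (-(1/2 : ℝ)) * y v with hgdef
  set N : ℝ := ∑ v, y v ^ 2 with hNdef
  have keyd : ∀ i, (G.degree i : ℝ) * g i ^ 2 = y i ^ 2 := by
    intro i
    have h := ee_d hdeg i
    simp only [hgdef]
    linear_combination (y i) ^ 2 * h
  have hB : ∑ i, ∑ j, (if G.Adj i j then g i ^ 2 else 0) = N := by
    rw [hNdef]
    refine Finset.sum_congr rfl fun i _ => ?_
    rw [sum_ite_adj, keyd]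
  have hC : ∑ i, ∑ j, (if G.Adj i j then g j ^ 2 else 0) = N := by
    rw [Finset.sum_comm]
    rw [hNdef]
    refine Finset.sum_congr rfl fun j _ => ?_
    have h : ∀ i, (if G.Adj i j then g j ^ 2 else 0) = (if G.Adj j i then g j ^ 2 else 0) := by
      intro i; simp only [G.adj_comm i j]
    simp_rw [h]
    rw [sum_ite_adj, keyd]
  have hA : ∑ i, ∑ j, (if G.Adj i j then g i * g j else 0) = μ * N := by
    have h1 : ∀ i, (normAdj G *ᵥ y) i = μ * y i := by
      intro i; rw [heq]; simp
    calc ∑ i, ∑ j, (if G.Adj i j then g i * g j else 0)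
        = ∑ i, y i * (normAdj G *ᵥ y) i := by
          refine Finset.sum_congr rfl fun i _ => ?_
          simp only [Matrix.mulVec, dotProduct, Finset.mul_sum]
          refine Finset.sum_congr rfl fun j _ => ?_
          rw [normAdj_apply, hgdef]
          split <;> ring
      _ = μ * N := by
          simp_rw [h1, hNdef, Finset.mul_sum]
          refine Finset.sum_congr rfl fun i _ => ?_
          ring
  have hN : 0 < N := by
    obtain ⟨v, hv⟩ := Function.ne_iff.mp hy
    refine Finset.sum_pos' (fun i _ => sq_nonneg _) ⟨v, Finset.mem_univ v, ?_⟩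
    exact (sq_nonneg _).lt_of_ne (Ne.symm (pow_ne_zero 2 hv))
  have expand : ∀ (s : ℝ), ∑ i, ∑ j, (if G.Adj i j then (g i + s * g j) ^ 2 else 0)
      = N + s ^ 2 * N + 2 * s * (μ * N) := by
    intro s
    have : ∀ i j, (if G.Adj i j then (g i + s * g j) ^ 2 else 0)
        = (if G.Adj i j then g i ^ 2 else 0) + s ^ 2 * (if G.Adj i j then g j ^ 2 else 0)
          + 2 * s * (if G.Adj i j then g i * g j else 0) := by
      intro i j; split <;> ring
    simp_rw [this, Finset.sum_add_distrib, ← Finset.mul_sum, hA, hB, hC]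
  have nonneg : ∀ (s : ℝ), 0 ≤ ∑ i, ∑ j, (if G.Adj i j then (g i + s * g j) ^ 2 else 0) := by
    intro s
    refine Finset.sum_nonneg fun i _ => Finset.sum_nonneg fun j _ => ?_
    split
    · exact sq_nonneg _
    · exact le_refl 0
  have h1 : μ ≤ 1 := by have h := nonneg (-1); rw [expand] at h; nlinarith
  have h2 : -1 ≤ μ := by have h := nonneg 1; rw [expand] at h; nlinarith
  refine ⟨lt_of_le_of_ne h2 ?_, h1⟩
  intro hμ
  exfalso
  have hzero : ∑ i, ∑ j, (if G.Adj i j then (g i + 1 * g j) ^ 2 else 0) = 0 := by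
    rw [expand 1, ← hμ]; ring
  have innonneg : ∀ (i j : V), 0 ≤ (if G.Adj i j then (g i + 1 * g j) ^ 2 else 0) := by
    intro i j; split
    · exact sq_nonneg _
    · exact le_refl 0
  have hopp : ∀ i j, G.Adj i j → g i = - g j := by
    intro i j hadj
    have houter := (Finset.sum_eq_zero_iff_of_nonneg
      (fun i _ => Finset.sum_nonneg fun j _ => innonneg i j)).mp hzero i (Finset.mem_univ i)
    have hinner := (Finset.sum_eq_zero_iff_of_nonneg
      (fun j _ => innonneg i j)).mp houter j (Finset.mem_univ j)
    rw [if_pos hadj] at hinner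
    have h0 : g i + g j = 0 := by
      have := sq_eq_zero_iff.mp (by linarith [hinner] : (g i + 1 * g j) ^ 2 = 0)
      linarith [this]
    linarith [h0]
  obtain ⟨v, hv⟩ := Function.ne_iff.mp hy
  have hgv : g v ≠ 0 := mul_ne_zero (ne_of_gt (e_pos hdeg v)) hv
  apply hbip (G.connectedComponentMk v)
  refine ⟨SimpleGraph.Coloring.mk (fun w => if 0 < g w.val then 0 else 1) ?_⟩
  intro a b hadj
  have hadj' : G.Adj a.val b.val := hadj
  have hga : g a.val ≠ 0 := by
    have hmem := a.2
    rw [SimpleGraph.ConnectedComponent.mem_supp_iff] at hmem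
    have hreach : G.Reachable v a.val := (SimpleGraph.ConnectedComponent.eq.mp hmem).symm
    exact hreach.elim fun p => walk_prop hopp p hgv
  have hob : g a.val = - g b.val := hopp _ _ hadj'
  have hgb : g b.val ≠ 0 := by
    intro h; rw [h, neg_zero] at hob; exact hga hob
  by_cases hb : 0 < g b.val
  · have hna : ¬ 0 < g a.val := by rw [hob]; linarith
    simp [hb, hna]
  · have hpa : 0 < g a.val := by
      rw [hob]
      rcases hgb.lt_or_gt with h' | h'
      · linarith
      · exact absurd h' hb
    simp [hb, hpa]

end EigBound

lemma normAdj_pow_tendsto (G : SimpleGraph V) [DecidableRel G.Adj]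
    (hdeg : ∀ v, 0 < G.degree v) (hbip : NoBipartiteComponent G) :
    ∃ P : Matrix V V ℝ, ∀ i j, Tendsto (fun k => (normAdj G ^ k) i j) atTop (nhds (P i j)) := by
  classical
  have hM := normAdj_isHermitian G
  set U : Matrix V V ℝ := (hM.eigenvectorUnitary : Matrix V V ℝ) with hUdef
  set d : V → ℝ := hM.eigenvalues with hddef
  have hU1 : U * star U = 1 := (Matrix.mem_unitaryGroup_iff).mp hM.eigenvectorUnitary.2
  have hU2 : star U * U = 1 := (Matrix.mem_unitaryGroup_iff').mp hM.eigenvectorUnitary.2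
  have hspec : normAdj G = U * Matrix.diagonal d * star U := by
    have h := hM.spectral_theorem
    simpa using h
  have hpow : ∀ k, normAdj G ^ k = U * Matrix.diagonal (fun l => d l ^ k) * star U := by
    intro k
    induction k with
    | zero =>
      simp only [pow_zero]
      rw [show (Matrix.diagonal fun _ : V => (1:ℝ)) = 1 from Matrix.diagonal_one,
        Matrix.mul_one, hU1]
    | succ k ih =>
      rw [pow_succ, ih, hspec]
      rw [show U * Matrix.diagonal (fun l => d l ^ k) * star U * (U * Matrix.diagonal d * star U)
          = U * (Matrix.diagonal (fun l => d l ^ k) * (star U * U) * Matrix.diagonal d) * star U by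
        simp only [Matrix.mul_assoc]]
      rw [hU2, Matrix.mul_one, Matrix.diagonal_mul_diagonal]
      simp_rw [← pow_succ]
  have entry : ∀ (f : V → ℝ) i j, (U * Matrix.diagonal f * star U) i j
      = ∑ l, U i l * f l * U j l := by
    intro f i j
    rw [Matrix.mul_apply]
    refine Finset.sum_congr rfl fun l _ => ?_
    rw [Matrix.mul_diagonal, Matrix.star_eq_conjTranspose, Matrix.conjTranspose_apply,
      star_trivial]
  have hrange : ∀ l, -1 < d l ∧ d l ≤ 1 := by
    intro l
    have hvec := hM.mulVec_eigenvectorBasis l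
    have hne : (⇑(hM.eigenvectorBasis l) : V → ℝ) ≠ 0 := by
      intro h0
      exact hM.eigenvectorBasis.orthonormal.ne_zero l (by ext x; exact congrFun h0 x)
    exact eig_range hdeg hbip hne hvec
  refine ⟨U * Matrix.diagonal (fun l => if d l = 1 then (1:ℝ) else 0) * star U, ?_⟩
  intro i j
  have hfun : (fun k => (normAdj G ^ k) i j)
      = fun k => ∑ l, U i l * d l ^ k * U j l := by
    funext k; rw [hpow k, entry]
  rw [hfun, entry]
  refine tendsto_finset_sum _ fun l _ => ?_
  by_cases h1 : d l = 1
  · simp only [h1, one_pow, if_pos]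
    exact tendsto_const_nhds
  · rw [if_neg h1]
    have habs : |d l| < 1 := by
      rcases hrange l with ⟨hlo, hhi⟩
      rw [abs_lt]
      exact ⟨hlo, lt_of_le_of_ne hhi h1⟩
    have := tendsto_pow_atTop_nhds_zero_of_abs_lt_one habs
    have h2 := (this.const_mul (U i l)).mul_const (U j l)
    have h3 : U i l * 0 * U j l = 0 := by ring
    rw [h3] at h2
    convert h2 using 2

lemma mul_limit {M P : Matrix V V ℝ}
    (h : ∀ i j, Tendsto (fun k => (M ^ k) i j) atTop (nhds (P i j))) : M * P = P := by
  ext i j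
  have h1 : Tendsto (fun k => (M ^ (k+1)) i j) atTop (nhds (P i j)) :=
    (h i j).comp (tendsto_add_atTop_nat 1)
  have h2 : Tendsto (fun k => (M ^ (k+1)) i j) atTop (nhds ((M * P) i j)) := by
    simp_rw [pow_succ', Matrix.mul_apply]
    exact tendsto_finset_sum _ fun l _ => (h l j).const_mul (M i l)
  exact tendsto_nhds_unique h2 h1

lemma fixed_limit {M P : Matrix V V ℝ}
    (h : ∀ i j, Tendsto (fun k => (M ^ k) i j) atTop (nhds (P i j)))
    {x : V → ℝ} (hx : M *ᵥ x = x) : P *ᵥ x = x := by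
  have hk : ∀ k, (M ^ k) *ᵥ x = x := by
    intro k
    induction k with
    | zero => simp
    | succ k ih => rw [pow_succ', ← Matrix.mulVec_mulVec, ih, hx]
  funext i
  have h1 : Tendsto (fun k => ((M ^ k) *ᵥ x) i) atTop (nhds ((P *ᵥ x) i)) := by
    simp_rw [Matrix.mulVec, dotProduct]
    exact tendsto_finset_sum _ fun l _ => (h i l).mul_const (x l)
  simp_rw [hk] at h1
  exact tendsto_nhds_unique h1 tendsto_const_nhds


theorem stmt0 {V : Type} [Fintype V] [DecidableEq V] [Nonempty V]
    (G₁ G₂ : SimpleGraph V) [DecidableRel G₁.Adj] [DecidableRel G₂.Adj]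
    (hdeg₁ : ∀ v, 0 < G₁.degree v) (hdeg₂ : ∀ v, 0 < G₂.degree v)
    (hbip₁ : NoBipartiteComponent G₁) (hbip₂ : NoBipartiteComponent G₂)
    (hx : ∃ x : V → ℝ, Xor' (normAdj G₁ *ᵥ x = x) (normAdj G₂ *ᵥ x = x)) :
    ∃ P₁ P₂ : Matrix V V ℝ,
      (∀ i j, Tendsto (fun k => (normAdj G₁ ^ k) i j) atTop (nhds (P₁ i j))) ∧
      (∀ i j, Tendsto (fun k => (normAdj G₂ ^ k) i j) atTop (nhds (P₂ i j))) ∧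
      ∀ W : Matrix V V ℝ, IsUnit W → P₁ * W ≠ P₂ * W := by
  obtain ⟨P₁, hP₁⟩ := normAdj_pow_tendsto G₁ hdeg₁ hbip₁
  obtain ⟨P₂, hP₂⟩ := normAdj_pow_tendsto G₂ hdeg₂ hbip₂
  refine ⟨P₁, P₂, hP₁, hP₂, ?_⟩
  have hne : P₁ ≠ P₂ := by
    intro hPP
    obtain ⟨x, hxor⟩ := hx
    rcases hxor with ⟨h1, h2⟩ | ⟨h2, h1⟩
    · apply h2
      have hfix : P₁ *ᵥ x = x := fixed_limit hP₁ h1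
      have : normAdj G₂ *ᵥ (P₂ *ᵥ x) = P₂ *ᵥ x := by
        rw [Matrix.mulVec_mulVec, mul_limit hP₂]
      rwa [← hPP, hfix] at this
    · apply h1
      have hfix : P₂ *ᵥ x = x := fixed_limit hP₂ h2
      have : normAdj G₁ *ᵥ (P₁ *ᵥ x) = P₁ *ᵥ x := by
        rw [Matrix.mulVec_mulVec, mul_limit hP₁]
      rwa [hPP, hfix] at this
  rintro W ⟨u, rfl⟩ heqW
  apply hne
  have h := congrArg (fun A => A * (↑u⁻¹ : Matrix V V ℝ)) heqW
  simp only [Matrix.mul_assoc, Units.mul_inv, Matrix.mul_one] at h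
  exact h
end

section
/- Let V be a finite vertex type with decidable equality and let G be a simple graph on V with decidable adjacency in which every vertex has positive degree and which has no bipartite connected component, and let M be its symmetrically normalized adjacency matrix. Then for every d : ℕ and every feature matrix X : Matrix V (Fin d) ℝ there exists Y : Matrix V (Fin d) ℝ such that M^k * X converges entrywise to Y as k → ∞ and M * Y = Y, i.e. every column of the limit lies in the eigenspace of M for eigenvalue 1. -/
open Matrix Filter

set_option linter.unusedSectionVars false

section Aux

variable {V : Type} [Fintype V] [DecidableEq V] (G : SimpleGraph V) [DecidableRel G.Adj]

lemma normAdj_isHermitian_s1 : (normAdj G).IsHermitian := by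
  have h : ∀ (B : Matrix V V ℝ), Bᴴ = Bᵀ := fun B => by ext i j; simp [conjTranspose_apply]
  unfold Matrix.IsHermitian normAdj
  rw [h, transpose_mul, transpose_mul, diagonal_transpose, SimpleGraph.transpose_adjMatrix,
    mul_assoc]

lemma bip_of_alt (y : V → ℝ) (v0 : V) (hv0 : y v0 ≠ 0)
    (halt : ∀ ⦃v u⦄, G.Adj v u → y u = - y v) :
    (G.induce (G.connectedComponentMk v0).supp).Colorable 2 := by
  have hwalk : ∀ {a b : V}, G.Walk a b → y a ≠ 0 → y b ≠ 0 := by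
    intro a b p
    induction p with
    | nil => exact id
    | cons h q ih => intro ha; exact ih (by rw [halt h]; simpa using ha)
  have hne : ∀ w ∈ (G.connectedComponentMk v0).supp, y w ≠ 0 := by
    intro w hw
    rw [SimpleGraph.ConnectedComponent.mem_supp_iff] at hw
    obtain ⟨p⟩ := (SimpleGraph.ConnectedComponent.eq.mp hw).symm
    exact hwalk p hv0
  refine ⟨SimpleGraph.Coloring.mk (fun w => if 0 < y w.1 then 0 else 1) ?_⟩
  rintro ⟨a, ha⟩ ⟨b, hb⟩ hab
  have hadj : G.Adj a b := hab
  have hya := hne a ha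
  have hyb := hne b hb
  have h := halt hadj
  rcases lt_or_gt_of_ne hya with h1 | h1
  · have h2 : 0 < y b := by rw [h]; linarith
    simp only [if_pos h2, if_neg (not_lt.mpr h1.le)]
    decide
  · have h2 : ¬ 0 < y b := by rw [h]; push_neg; linarith
    simp only [if_pos h1, if_neg h2]
    decide

lemma eigen_mem (hdeg : ∀ v, 0 < G.degree v) (hbip : NoBipartiteComponent G)
    {μ : ℝ} {x : V → ℝ} (hx : x ≠ 0) (hMx : normAdj G *ᵥ x = μ • x) :
    -1 < μ ∧ μ ≤ 1 := by
  set S : V → ℝ := fun v => (G.degree v : ℝ) ^ (-(1/2 : ℝ)) with hSdef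
  set y : V → ℝ := fun v => S v * x v with hydef
  have hdpos : ∀ v, (0:ℝ) < G.degree v := fun v => by exact_mod_cast hdeg v
  have hSpos : ∀ v, 0 < S v := fun v => Real.rpow_pos_of_pos (hdpos v) _
  have hSS : ∀ v, S v * S v * (G.degree v : ℝ) = 1 := by
    intro v
    have : S v * S v = (G.degree v : ℝ) ^ (-(1/2 : ℝ) + -(1/2 : ℝ)) :=
      (Real.rpow_add (hdpos v) _ _).symm
    rw [this]
    norm_num
    rw [Real.rpow_neg_one]
    exact inv_mul_cancel₀ (ne_of_gt (hdpos v))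
  -- mulVec formula
  have hMx' : ∀ v, μ * x v = S v * ∑ u ∈ G.neighborFinset v, y u := by
    intro v
    have h1 : normAdj G *ᵥ x =
        Matrix.diagonal S *ᵥ (G.adjMatrix ℝ *ᵥ (Matrix.diagonal S *ᵥ x)) := by
      rw [mulVec_mulVec, mulVec_mulVec]; rfl
    have h2 : Matrix.diagonal S *ᵥ x = y := by
      funext w; rw [mulVec_diagonal]
    have := congrFun hMx v
    rw [h1, h2] at this
    rw [mulVec_diagonal, SimpleGraph.adjMatrix_mulVec_apply] at this
    simpa [Pi.smul_apply, smul_eq_mul] using this.symm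
  set T : ℝ := ∑ v, (G.degree v : ℝ) * y v ^ 2 with hTdef
  set B : ℝ := ∑ v, y v * ∑ u ∈ G.neighborFinset v, y u with hBdef
  have hT : ∑ v, x v ^ 2 = T := by
    refine Finset.sum_congr rfl fun v _ => ?_
    rw [hydef]
    have := hSS v
    ring_nf
    nlinarith [hSS v]
  have hTpos : 0 < T := by
    rw [← hT]
    obtain ⟨v, hv⟩ := Function.ne_iff.mp hx
    exact Finset.sum_pos' (fun w _ => sq_nonneg _) ⟨v, Finset.mem_univ v, pow_two_pos_of_ne_zero hv⟩
  have hB : B = μ * T := by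
    rw [← hT, hBdef, Finset.mul_sum]
    refine Finset.sum_congr rfl fun v _ => ?_
    have h1 : y v * ∑ u ∈ G.neighborFinset v, y u
        = x v * (S v * ∑ u ∈ G.neighborFinset v, y u) := by rw [hydef]; ring
    rw [h1, ← hMx' v]; ring
  -- double sum manipulation
  have hswap : ∀ (f : V → V → ℝ),
      ∑ v, ∑ u ∈ G.neighborFinset v, f v u = ∑ v, ∑ u ∈ G.neighborFinset v, f u v := by
    intro f
    have key : ∀ (g : V → V → ℝ),
        ∑ v, ∑ u ∈ G.neighborFinset v, g v u = ∑ v, ∑ u, if G.Adj v u then g v u else 0 := by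
      intro g
      refine Finset.sum_congr rfl fun v _ => ?_
      rw [SimpleGraph.neighborFinset_eq_filter, Finset.sum_filter]
    rw [key, key, Finset.sum_comm]
    refine Finset.sum_congr rfl fun v _ => Finset.sum_congr rfl fun u _ => ?_
    by_cases h : G.Adj u v
    · rw [if_pos h, if_pos h.symm]
    · rw [if_neg h, if_neg fun hh => h hh.symm]
  have hconst : ∀ (c : V → ℝ), ∑ v, ∑ _u ∈ G.neighborFinset v, c v
      = ∑ v, (G.degree v : ℝ) * c v := by
    refine fun c => Finset.sum_congr rfl fun v _ => ?_
    rw [Finset.sum_const, SimpleGraph.card_neighborFinset_eq_degree, nsmul_eq_mul]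
  have hexpand : ∀ ε : ℝ, ε = 1 ∨ ε = -1 →
      ∑ v, ∑ u ∈ G.neighborFinset v, (y v + ε * y u) ^ 2 = 2 * T + ε * (2 * B) := by
    intro ε hε
    have he2 : ε ^ 2 = 1 := by rcases hε with h | h <;> simp [h]
    have step : ∀ v, ∑ u ∈ G.neighborFinset v, (y v + ε * y u) ^ 2
        = (G.degree v : ℝ) * y v ^ 2 + (∑ u ∈ G.neighborFinset v, y u ^ 2)
          + (2 * ε) * (y v * ∑ u ∈ G.neighborFinset v, y u) := by
      intro v
      have h1 : ∀ u, (y v + ε * y u) ^ 2 = y v ^ 2 + (y u ^ 2 + (2 * ε) * (y v * y u)) := by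
        intro u; linear_combination y u ^ 2 * he2
      rw [Finset.sum_congr rfl fun u _ => h1 u, Finset.sum_add_distrib, Finset.sum_add_distrib,
        Finset.sum_const, SimpleGraph.card_neighborFinset_eq_degree, nsmul_eq_mul,
        ← Finset.mul_sum, ← Finset.mul_sum]
      ring
    simp only [step]
    rw [Finset.sum_add_distrib, Finset.sum_add_distrib, ← Finset.mul_sum]
    have hmid : ∑ v, ∑ u ∈ G.neighborFinset v, y u ^ 2 = T := by
      rw [hswap fun v u => y u ^ 2]; exact hconst fun v => y v ^ 2
    rw [hmid, ← hTdef, ← hBdef]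
    ring
  have hnn : ∀ ε : ℝ, 0 ≤ ∑ v, ∑ u ∈ G.neighborFinset v, (y v + ε * y u) ^ 2 :=
    fun ε => Finset.sum_nonneg fun v _ => Finset.sum_nonneg fun u _ => sq_nonneg _
  have hle : μ ≤ 1 := by
    have h1 := hexpand (-1) (Or.inr rfl)
    have h2 := hnn (-1)
    rw [h1, hB] at h2
    nlinarith
  have hge : -1 ≤ μ := by
    have h1 := hexpand 1 (Or.inl rfl)
    have h2 := hnn 1
    rw [h1, hB] at h2
    nlinarith
  refine ⟨lt_of_le_of_ne hge ?_, hle⟩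
  intro hμ
  have hzero : ∑ v, ∑ u ∈ G.neighborFinset v, (y v + 1 * y u) ^ 2 = 0 := by
    rw [hexpand 1 (Or.inl rfl), hB, ← hμ]; ring
  have halt : ∀ ⦃v u⦄, G.Adj v u → y u = - y v := by
    intro v u hadj
    have h1 := (Finset.sum_eq_zero_iff_of_nonneg
      (fun v _ => Finset.sum_nonneg fun u _ => sq_nonneg _)).mp hzero v (Finset.mem_univ v)
    have h2 := (Finset.sum_eq_zero_iff_of_nonneg (fun u _ => sq_nonneg _)).mp h1 u
      (by rwa [SimpleGraph.mem_neighborFinset])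
    have := pow_eq_zero_iff (n := 2) (by norm_num) |>.mp h2
    linarith
  obtain ⟨v0, hv0⟩ := Function.ne_iff.mp hx
  have hyv0 : y v0 ≠ 0 := by
    rw [hydef]; exact mul_ne_zero (ne_of_gt (hSpos v0)) hv0
  exact hbip _ (bip_of_alt G y v0 hyv0 halt)

end Aux

theorem stmt1 {V : Type} [Fintype V] [DecidableEq V]
    (G : SimpleGraph V) [DecidableRel G.Adj]
    (hdeg : ∀ v, 0 < G.degree v) (hbip : NoBipartiteComponent G)
    (d : ℕ) (X : Matrix V (Fin d) ℝ) :
    ∃ Y : Matrix V (Fin d) ℝ,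
      (∀ v i, Tendsto (fun k => ((normAdj G ^ k * X : Matrix V (Fin d) ℝ)) v i) atTop (nhds (Y v i))) ∧
      normAdj G * Y = Y := by
  classical
  have hM : (normAdj G).IsHermitian := normAdj_isHermitian_s1 G
  set U : Matrix V V ℝ := (hM.eigenvectorUnitary : Matrix V V ℝ) with hUdef
  set Λ : V → ℝ := hM.eigenvalues with hΛdef
  have hbound : ∀ a, -1 < Λ a ∧ Λ a ≤ 1 := by
    intro a
    refine eigen_mem G hdeg hbip (x := ⇑(hM.eigenvectorBasis a)) ?_ (hM.mulVec_eigenvectorBasis a)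
    intro h
    exact hM.eigenvectorBasis.orthonormal.ne_zero a (by ext v; exact congrFun h v)
  have hspec : normAdj G = U * Matrix.diagonal Λ * star U := by
    have h := hM.spectral_theorem
    have h2 : (RCLike.ofReal ∘ hM.eigenvalues : V → ℝ) = Λ := by funext a; simp [hΛdef]
    rw [h2, Unitary.conjStarAlgAut_apply] at h
    exact h
  have hUU : star U * U = 1 := Matrix.UnitaryGroup.star_mul_self hM.eigenvectorUnitary
  have hUU' : U * star U = 1 := Matrix.mem_unitaryGroup_iff.mp hM.eigenvectorUnitary.2
  have hpow : ∀ k, normAdj G ^ k = U * Matrix.diagonal (fun a => Λ a ^ k) * star U := by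
    intro k
    induction k with
    | zero =>
      have h1 : (Matrix.diagonal fun a => Λ a ^ 0) = (1 : Matrix V V ℝ) := by
        simp [Matrix.diagonal_one]
      rw [pow_zero, h1, mul_one, hUU']
    | succ k ih =>
      rw [pow_succ, ih, hspec]
      simp only [Matrix.mul_assoc]
      rw [← Matrix.mul_assoc (star U) U, hUU, Matrix.one_mul,
        ← Matrix.mul_assoc (Matrix.diagonal fun a => Λ a ^ k) (Matrix.diagonal Λ),
        Matrix.diagonal_mul_diagonal,
        show (fun i => Λ i ^ k * Λ i) = fun a => Λ a ^ (k + 1) from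
          funext fun a => (pow_succ _ _).symm]
  set P : Matrix V V ℝ := Matrix.diagonal (fun a => if Λ a = 1 then (1:ℝ) else 0) with hPdef
  refine ⟨U * P * (star U * X), fun v i => ?_, ?_⟩
  · have hentry : ∀ k, (normAdj G ^ k * X) v i
        = ∑ a, U v a * Λ a ^ k * ((star U * X) a i) := by
      intro k
      rw [hpow k, Matrix.mul_assoc, Matrix.mul_assoc, Matrix.mul_apply]
      refine Finset.sum_congr rfl fun a _ => ?_
      rw [Matrix.diagonal_mul, ← mul_assoc]
    have hlim : (U * P * (star U * X)) v i
        = ∑ a, U v a * (if Λ a = 1 then (1:ℝ) else 0) * ((star U * X) a i) := by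
      rw [Matrix.mul_assoc, Matrix.mul_apply]
      refine Finset.sum_congr rfl fun a _ => ?_
      rw [hPdef, Matrix.diagonal_mul, ← mul_assoc]
    simp only [hentry, hlim]
    apply tendsto_finset_sum
    intro a _
    have hlam : Tendsto (fun k : ℕ => Λ a ^ k) atTop (nhds (if Λ a = 1 then (1:ℝ) else 0)) := by
      split_ifs with h
      · simp only [h, one_pow]; exact tendsto_const_nhds
      · exact tendsto_pow_atTop_nhds_zero_of_abs_lt_one
          (abs_lt.mpr ⟨(hbound a).1, lt_of_le_of_ne (hbound a).2 h⟩)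
    exact (hlam.const_mul (U v a)).mul_const _
  · have hDP : Matrix.diagonal (fun a => Λ a * if Λ a = 1 then (1:ℝ) else 0)
        = Matrix.diagonal (fun a => if Λ a = 1 then (1:ℝ) else 0) := by
      have h0 : (fun a => Λ a * if Λ a = 1 then (1:ℝ) else 0)
          = fun a => if Λ a = 1 then (1:ℝ) else 0 := by
        funext a
        split_ifs with h <;> simp [h]
      rw [h0]
    rw [hspec, hPdef]
    simp only [Matrix.mul_assoc]
    rw [← Matrix.mul_assoc (star U) U, hUU, Matrix.one_mul,
      ← Matrix.mul_assoc (Matrix.diagonal Λ), Matrix.diagonal_mul_diagonal, hDP]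
end

section
/- Let V be a finite vertex type with decidable equality and let G be a simple graph on V with decidable adjacency in which every vertex has positive degree, and let M be its symmetrically normalized adjacency matrix. Then the matrix 1 + M is positive semidefinite. -/
open Matrix Filter

theorem stmt3 {V : Type} [Fintype V] [DecidableEq V]
    (G : SimpleGraph V) [DecidableRel G.Adj] (hdeg : ∀ v, 0 < G.degree v) :
    (1 + normAdj G).PosSemidef := by
  classical
  set c : V → ℝ := fun v => ((G.degree v : ℝ)) with hc
  have hcpos : ∀ v, 0 < c v := fun v => by
    simp only [hc]; exact_mod_cast hdeg v
  set p : V → ℝ := fun v => c v ^ (-(1/2:ℝ)) with hp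
  have hentry : ∀ u v, normAdj G u v = p u * G.adjMatrix ℝ u v * p v := by
    intro u v
    simp only [normAdj, Matrix.mul_diagonal, Matrix.diagonal_mul, hp, hc]
  have hAsymm : ∀ u v, G.adjMatrix ℝ u v = G.adjMatrix ℝ v u := by
    intro u v
    simp [SimpleGraph.adjMatrix_apply, G.adj_comm]
  have hpc : ∀ v, p v * p v * c v = 1 := by
    intro v
    calc p v * p v * c v
        = c v ^ (-(1/2:ℝ)) * c v ^ (-(1/2:ℝ)) * c v ^ (1:ℝ) := by
          rw [Real.rpow_one]
      _ = c v ^ (-(1/2:ℝ) + -(1/2:ℝ) + 1) := by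
          rw [← Real.rpow_add (hcpos v), ← Real.rpow_add (hcpos v)]
      _ = 1 := by norm_num
  have hdegsum : ∀ u, (∑ v, G.adjMatrix ℝ u v) = c u := by
    intro u
    have hd : G.degree u = (Finset.univ.filter (G.Adj u)).card := by
      rw [← SimpleGraph.neighborFinset_eq_filter]; rfl
    simp only [SimpleGraph.adjMatrix_apply, hc, hd, Finset.sum_boole]
  rw [Matrix.posSemidef_iff_dotProduct_mulVec]
  constructor
  · exact Matrix.isHermitian_one.add <| by
      ext u v
      simp only [conjTranspose_apply, star_trivial, hentry, hAsymm u v]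
      ring
  · intro x
    have hstar : star x = x := by simp
    rw [hstar]
    set y : V → ℝ := fun v => p v * x v with hy
    have hquad : x ⬝ᵥ ((1 + normAdj G) *ᵥ x)
        = (∑ u, ∑ v, G.adjMatrix ℝ u v * (y u * y v)) + ∑ v, x v * x v := by
      rw [add_mulVec, one_mulVec, dotProduct_add, add_comm]
      congr 1
      simp only [dotProduct, mulVec, hentry, Finset.mul_sum]
      refine Finset.sum_congr rfl fun u _ => Finset.sum_congr rfl fun v _ => ?_
      simp only [hy]
      ring
    have hxsq : ∀ v, x v * x v = ∑ u, G.adjMatrix ℝ v u * (y v * y v) := by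
      intro v
      rw [← Finset.sum_mul, hdegsum]
      have h := hpc v
      simp only [hy]
      nlinarith [hpc v]
    have h2 : ∑ v, x v * x v = ∑ u, ∑ v, G.adjMatrix ℝ u v * (y u * y u) := by
      refine Finset.sum_congr rfl fun v _ => hxsq v
    have h3 : ∑ u, ∑ v, G.adjMatrix ℝ u v * (y u * y u)
        = ∑ u, ∑ v, G.adjMatrix ℝ u v * (y v * y v) := by
      rw [Finset.sum_comm]
      refine Finset.sum_congr rfl fun u _ => Finset.sum_congr rfl fun v _ => ?_
      rw [hAsymm u v]
    have hsq : 0 ≤ ∑ u, ∑ v, G.adjMatrix ℝ u v * (y u + y v) ^ 2 := by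
      refine Finset.sum_nonneg fun u _ => Finset.sum_nonneg fun v _ => ?_
      exact mul_nonneg (by simp [SimpleGraph.adjMatrix_apply]; positivity) (sq_nonneg _)
    have hexp : ∑ u, ∑ v, G.adjMatrix ℝ u v * (y u + y v) ^ 2
        = (∑ u, ∑ v, G.adjMatrix ℝ u v * (y u * y u))
          + (∑ u, ∑ v, G.adjMatrix ℝ u v * (y v * y v))
          + 2 * ∑ u, ∑ v, G.adjMatrix ℝ u v * (y u * y v) := by
      rw [Finset.mul_sum, ← Finset.sum_add_distrib, ← Finset.sum_add_distrib]
      refine Finset.sum_congr rfl fun u _ => ?_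
      rw [Finset.mul_sum, ← Finset.sum_add_distrib, ← Finset.sum_add_distrib]
      refine Finset.sum_congr rfl fun v _ => ?_
      ring
    rw [hquad, h2]
    linarith [hsq, hexp, h3]
end

section
/- Let V be a finite vertex type with decidable equality and let G be a simple graph on V with decidable adjacency in which every vertex has positive degree, and let M be its symmetrically normalized adjacency matrix. Then every real eigenvalue μ of M (i.e. every μ : ℝ such that M *ᵥ x = μ • x for some x ≠ 0) satisfies -1 ≤ μ ≤ 1. -/
open Matrix Filter

theorem stmt4 {V : Type} [Fintype V] [DecidableEq V]
    (G : SimpleGraph V) [DecidableRel G.Adj] (hdeg : ∀ v, 0 < G.degree v) :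
    ∀ (μ : ℝ) (x : V → ℝ), x ≠ 0 → normAdj G *ᵥ x = μ • x → -1 ≤ μ ∧ μ ≤ 1 := by
  intro μ x hx hM
  set c : V → ℝ := fun v => (G.degree v : ℝ) ^ (-(1/2 : ℝ)) with hc_def
  have hdpos : ∀ v, (0:ℝ) < (G.degree v : ℝ) := fun v => by exact_mod_cast hdeg v
  have hc : ∀ v, 0 < c v := fun v => Real.rpow_pos_of_pos (hdpos v) _
  set y : V → ℝ := fun v => c v * x v with hy_def
  have key : ∀ v, ∑ w ∈ G.neighborFinset v, y w = μ * ((G.degree v : ℝ) * y v) := by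
    intro v
    have h1 : (normAdj G *ᵥ x) v = μ * x v := by rw [hM]; rfl
    have h2 : (normAdj G *ᵥ x) v = c v * ∑ w ∈ G.neighborFinset v, y w := by
      rw [normAdj, ← Matrix.mulVec_mulVec, ← Matrix.mulVec_mulVec,
        Matrix.mulVec_diagonal, SimpleGraph.adjMatrix_mulVec_apply]
      congr 1
      exact Finset.sum_congr rfl (fun w _ => by rw [Matrix.mulVec_diagonal])
    have hcc : (G.degree v : ℝ) * (c v * c v) = 1 := by
      rw [hc_def]
      have : ((G.degree v : ℝ) ^ (-(1/2 : ℝ))) * ((G.degree v : ℝ) ^ (-(1/2 : ℝ)))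
          = (G.degree v : ℝ) ^ (-1 : ℝ) := by
        rw [← Real.rpow_add (hdpos v)]; norm_num
      rw [this, Real.rpow_neg_one, mul_inv_cancel₀ (hdpos v).ne']
    apply mul_left_cancel₀ (hc v).ne'
    rw [← h2, h1]
    simp only [hy_def]
    linear_combination (-(μ * x v)) * hcc
  obtain ⟨v0, hv0⟩ := Function.ne_iff.mp hx
  have hy0 : y v0 ≠ 0 := mul_ne_zero (hc v0).ne' hv0
  obtain ⟨v, -, hv⟩ := Finset.exists_max_image Finset.univ (fun w => |y w|)
    ⟨v0, Finset.mem_univ v0⟩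
  have hyv : 0 < |y v| := lt_of_lt_of_le (abs_pos.mpr hy0) (hv v0 (Finset.mem_univ v0))
  have hdv : 0 < (G.degree v : ℝ) := hdpos v
  have habs : |μ| * ((G.degree v : ℝ) * |y v|) ≤ (G.degree v : ℝ) * |y v| := by
    have e1 : |μ| * ((G.degree v : ℝ) * |y v|) = |μ * ((G.degree v : ℝ) * y v)| := by
      rw [abs_mul μ ((G.degree v : ℝ) * y v), abs_mul ((G.degree v : ℝ)) (y v), abs_of_pos hdv]
    rw [e1, ← key v]
    calc |∑ w ∈ G.neighborFinset v, y w| ≤ ∑ w ∈ G.neighborFinset v, |y w| :=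
          Finset.abs_sum_le_sum_abs _ _
      _ ≤ ∑ w ∈ G.neighborFinset v, |y v| :=
          Finset.sum_le_sum (fun w _ => hv w (Finset.mem_univ w))
      _ = (G.degree v : ℝ) * |y v| := by
          rw [Finset.sum_const, nsmul_eq_mul]
          congr 1
  have hmu : |μ| ≤ 1 := by
    have hpos : 0 < (G.degree v : ℝ) * |y v| := mul_pos hdv hyv
    nlinarith
  exact abs_le.mp hmu
end

section
/- Let V be a finite vertex type with decidable equality and let G be a simple graph on V with decidable adjacency in which every vertex has positive degree, and let M be its symmetrically normalized adjacency matrix. Then -1 is an eigenvalue of M (i.e. there exists x ≠ 0 with M *ᵥ x = (-1) • x) if and only if some connected component of G is bipartite. -/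
open Matrix Filter

section Aux

variable {V : Type} [Fintype V] [DecidableEq V]
  (G : SimpleGraph V) [DecidableRel G.Adj]

/-- Abbreviation for the inverse square root of the degree. -/
noncomputable def ds (v : V) : ℝ := (G.degree v : ℝ) ^ (-(1/2 : ℝ))

lemma normAdj_mulVec_apply (x : V → ℝ) (v : V) :
    (normAdj G *ᵥ x) v = ds G v * ∑ u ∈ G.neighborFinset v, ds G u * x u := by
  rw [normAdj, ← Matrix.mulVec_mulVec, ← Matrix.mulVec_mulVec,
    Matrix.mulVec_diagonal, SimpleGraph.adjMatrix_mulVec_apply]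
  simp [Matrix.mulVec_diagonal, ds]

variable (hdeg : ∀ v, 0 < G.degree v)
include hdeg

lemma degR_pos (v : V) : (0 : ℝ) < (G.degree v : ℝ) := by exact_mod_cast hdeg v

lemma ds_pos (v : V) : 0 < ds G v := Real.rpow_pos_of_pos (degR_pos G hdeg v) _

lemma ds_mul_ds (v : V) : ds G v * ds G v = ((G.degree v : ℝ))⁻¹ := by
  rw [ds, ← Real.rpow_add (degR_pos G hdeg v)]
  norm_num [Real.rpow_neg_one]

lemma ds_mul_sqrt (v : V) :
    ds G v * (G.degree v : ℝ) ^ ((1 : ℝ)/2) = 1 := by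
  rw [ds, ← Real.rpow_add (degR_pos G hdeg v)]
  norm_num

/-- The eigen-equation rewritten in terms of `y v = ds v * x v`. -/
lemma eig_iff (x : V → ℝ) :
    normAdj G *ᵥ x = (-1 : ℝ) • x ↔
      ∀ v, ∑ u ∈ G.neighborFinset v, ds G u * x u
        = -(G.degree v : ℝ) * (ds G v * x v) := by
  constructor
  · intro h v
    have hv := congrFun h v
    rw [normAdj_mulVec_apply] at hv
    have hv' : ds G v * ∑ u ∈ G.neighborFinset v, ds G u * x u = -x v := by
      simpa using hv
    have hdne : (G.degree v : ℝ) ≠ 0 := (degR_pos G hdeg v).ne'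
    have hinv : ds G v * ds G v * (G.degree v : ℝ) = 1 := by
      rw [ds_mul_ds G hdeg v, inv_mul_cancel₀ hdne]
    linear_combination (ds G v * (G.degree v : ℝ)) * hv'
      - (∑ u ∈ G.neighborFinset v, ds G u * x u) * hinv
  · intro h
    funext v
    rw [normAdj_mulVec_apply]
    have hdne : (G.degree v : ℝ) ≠ 0 := (degR_pos G hdeg v).ne'
    have hinv : ds G v * ds G v * (G.degree v : ℝ) = 1 := by
      rw [ds_mul_ds G hdeg v, inv_mul_cancel₀ hdne]
    have : ((-1 : ℝ) • x) v = -x v := by simp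
    rw [this]
    linear_combination (ds G v) * (h v) - (x v) * hinv

end Aux

theorem stmt5 {V : Type} [Fintype V] [DecidableEq V]
    (G : SimpleGraph V) [DecidableRel G.Adj] (hdeg : ∀ v, 0 < G.degree v) :
    (∃ x : V → ℝ, x ≠ 0 ∧ normAdj G *ᵥ x = (-1 : ℝ) • x) ↔
      ∃ c : G.ConnectedComponent, (G.induce c.supp).Colorable 2 := by
  constructor
  · rintro ⟨x, hx0, hx⟩
    rw [eig_iff G hdeg] at hx
    set y : V → ℝ := fun v => ds G v * x v with hy
    -- y is nonzero somewhere
    obtain ⟨v1, hv1⟩ : ∃ v, x v ≠ 0 := by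
      by_contra h
      push_neg at h
      exact hx0 (funext h)
    have hyv1 : y v1 ≠ 0 := mul_ne_zero (ds_pos G hdeg v1).ne' hv1
    -- pick a maximizer of |y|
    obtain ⟨v0, -, hv0⟩ := Finset.exists_max_image Finset.univ (fun v => |y v|)
      ⟨v1, Finset.mem_univ v1⟩
    set m : ℝ := |y v0| with hm
    have hmpos : 0 < m := lt_of_lt_of_le (abs_pos.mpr hyv1) (hv0 v1 (Finset.mem_univ v1))
    -- key claim: at a maximizer, all neighbors have opposite value
    have claim : ∀ v, |y v| = m → ∀ u ∈ G.neighborFinset v, y u = -y v := by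
      intro v hvm u hu
      have hyne : y v ≠ 0 := by
        intro h; rw [h, abs_zero] at hvm; exact hmpos.ne hvm
      have hsum : ∑ u ∈ G.neighborFinset v, (y v * y v + y v * y u) = 0 := by
        rw [Finset.sum_add_distrib, Finset.sum_const, ← Finset.mul_sum, hx v,
          SimpleGraph.card_neighborFinset_eq_degree]
        push_cast
        ring
      have hnonneg : ∀ w ∈ G.neighborFinset v, 0 ≤ y v * y v + y v * y w := by
        intro w _
        have h1 : |y v * y w| ≤ y v * y v := by
          rw [abs_mul, hvm]
          calc m * |y w| ≤ m * m := by
                exact mul_le_mul_of_nonneg_left (hv0 w (Finset.mem_univ w)) hmpos.le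
            _ = |y v| * |y v| := by rw [hvm]
            _ = y v * y v := abs_mul_abs_self _
        nlinarith [abs_le.mp h1]
      have hterm := (Finset.sum_eq_zero_iff_of_nonneg hnonneg).mp hsum u hu
      have : y v * y u = y v * (-y v) := by linarith
      exact mul_left_cancel₀ hyne this
    -- |y| = m propagates along walks
    have hwalk : ∀ (a b : V), G.Walk a b → |y a| = m → |y b| = m := by
      intro a b p
      induction p with
      | nil => exact fun h => h
      | cons h p ih =>
        intro ha
        apply ih
        have := claim _ ha _ ((SimpleGraph.mem_neighborFinset G _ _).mpr h)
        rw [this, abs_neg]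
        exact ha
    refine ⟨G.connectedComponentMk v0, ⟨SimpleGraph.Coloring.mk
      (fun v => if y v.1 = m then (0 : Fin 2) else 1) ?_⟩⟩
    rintro ⟨a, ha⟩ ⟨b, hb⟩ hadj
    have hadj' : G.Adj a b := hadj
    have hma : |y a| = m := by
      obtain ⟨p⟩ := (SimpleGraph.ConnectedComponent.eq.mp
        (ha : G.connectedComponentMk a = G.connectedComponentMk v0)).symm
      exact hwalk _ _ p rfl
    have hba : y b = -y a := claim _ hma _ ((SimpleGraph.mem_neighborFinset G _ _).mpr hadj')
    simp only
    split_ifs with h1 h2 h2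
    · exfalso
      rw [h1] at hba
      rw [hba] at h2
      have : m = 0 := by linarith
      exact hmpos.ne' this
    · simp
    · simp
    · exfalso
      apply h2
      rw [hba]
      rcases abs_eq hmpos.le |>.mp hma with h | h
      · exact absurd h h1
      · rw [h]; ring
  · rintro ⟨c, ⟨C⟩⟩
    classical
    set sgn : V → ℝ := fun v =>
      if h : v ∈ c.supp then (if C ⟨v, h⟩ = 0 then 1 else -1) else 0 with hsgn
    set x : V → ℝ := fun v => sgn v * (G.degree v : ℝ) ^ ((1 : ℝ)/2) with hxdef
    have hsqrt_pos : ∀ v, (0:ℝ) < (G.degree v : ℝ) ^ ((1 : ℝ)/2) :=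
      fun v => Real.rpow_pos_of_pos (degR_pos G hdeg v) _
    have hsgn_opp : ∀ v u, G.Adj v u → v ∈ c.supp → sgn u = -sgn v := by
      intro v u hadj hv
      have hu : u ∈ c.supp := by
        rw [SimpleGraph.ConnectedComponent.mem_supp_iff] at hv ⊢
        rw [← hv]
        exact (SimpleGraph.ConnectedComponent.connectedComponentMk_eq_of_adj (G := G) hadj).symm
      have hC : C ⟨v, hv⟩ ≠ C ⟨u, hu⟩ := by
        apply C.valid
        simpa [SimpleGraph.comap_adj] using hadj
      simp only [hsgn, dif_pos hv, dif_pos hu]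
      generalize hA : C ⟨v, hv⟩ = A at hC
      generalize hB : C ⟨u, hu⟩ = B at hC
      fin_cases A <;> fin_cases B <;> simp_all <;> norm_num
    refine ⟨x, ?_, ?_⟩
    · obtain ⟨v0, rfl⟩ := Quot.exists_rep c
      have hv0 : v0 ∈ SimpleGraph.ConnectedComponent.supp (Quot.mk G.Reachable v0) := rfl
      intro h0
      have hthis := congrFun h0 v0
      simp only [hxdef, Pi.zero_apply] at hthis
      rcases mul_eq_zero.mp hthis with hs | hq
      · simp only [hsgn, dif_pos hv0] at hs
        split_ifs at hs <;> norm_num at hs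
      · exact (hsqrt_pos v0).ne' hq
    · rw [eig_iff G hdeg]
      intro v
      have hterm : ∀ u, ds G u * x u = sgn u := by
        intro u
        simp only [hxdef]
        rw [← mul_assoc, mul_comm (ds G u) (sgn u), mul_assoc, ds_mul_sqrt G hdeg u, mul_one]
      simp only [hterm]
      by_cases hv : v ∈ c.supp
      · have : ∀ u ∈ G.neighborFinset v, sgn u = -sgn v := by
          intro u hu
          exact hsgn_opp v u ((SimpleGraph.mem_neighborFinset G _ _).mp hu) hv
        rw [Finset.sum_congr rfl this, Finset.sum_const,
          SimpleGraph.card_neighborFinset_eq_degree]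
        push_cast
        ring
      · have hzero : ∀ u ∈ G.neighborFinset v, sgn u = 0 := by
          intro u hu
          have hadj := (SimpleGraph.mem_neighborFinset G _ _).mp hu
          have hun : u ∉ c.supp := by
            intro huc
            apply hv
            rw [SimpleGraph.ConnectedComponent.mem_supp_iff] at huc ⊢
            rw [← huc]
            exact SimpleGraph.ConnectedComponent.connectedComponentMk_eq_of_adj (G := G) hadj
          simp only [hsgn, dif_neg hun]
        rw [Finset.sum_congr rfl hzero, Finset.sum_const]
        simp only [hsgn, dif_neg hv]
        simp
end

section
/- Let V be a finite vertex type with decidable equality and let G be a simple graph on V with decidable adjacency in which every vertex has positive degree, and let M be its symmetrically normalized adjacency matrix. Then the ℝ-dimension (finrank) of the subspace {x : V → ℝ | M *ᵥ x = x} of eigenvectors of M for eigenvalue 1 equals the number of connected components of G. -/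
open Matrix Filter

theorem stmt7 {V : Type} [Fintype V] [DecidableEq V]
    (G : SimpleGraph V) [DecidableRel G.Adj] (hdeg : ∀ v, 0 < G.degree v) :
    Module.finrank ℝ ↥(Module.End.eigenspace (Matrix.mulVecLin (normAdj G)) 1) =
      Nat.card G.ConnectedComponent := by
  classical
  set s : V → ℝ := fun v => (G.degree v : ℝ) ^ (-(1/2 : ℝ)) with hs
  have hdpos : ∀ v, (0:ℝ) < (G.degree v : ℝ) := fun v => by exact_mod_cast hdeg v
  have hspos : ∀ v, 0 < s v := fun v => Real.rpow_pos_of_pos (hdpos v) _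
  have hsne : ∀ v, s v ≠ 0 := fun v => (hspos v).ne'
  have hds : ∀ v, (G.degree v : ℝ) * s v = (s v)⁻¹ := by
    intro v
    have h1 : ((G.degree v:ℝ) ^ (-(1/2:ℝ)))⁻¹ = (G.degree v:ℝ) ^ (1/2:ℝ) := by
      rw [← Real.rpow_neg (hdpos v).le]; norm_num
    show (G.degree v:ℝ) * (G.degree v:ℝ) ^ (-(1/2:ℝ)) = ((G.degree v:ℝ) ^ (-(1/2:ℝ)))⁻¹
    rw [h1]
    nth_rewrite 1 [← Real.rpow_one (G.degree v:ℝ)]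
    rw [← Real.rpow_add (hdpos v)]
    norm_num
  -- the linear equivalence given by multiplication by diagonal s
  have hmul : Matrix.diagonal s * Matrix.diagonal (fun v => (s v)⁻¹) = 1 := by
    rw [diagonal_mul_diagonal]
    convert diagonal_one using 2
    exact funext fun v => mul_inv_cancel₀ (hsne v)
  have hmul' : Matrix.diagonal (fun v => (s v)⁻¹) * Matrix.diagonal s = 1 := by
    rw [diagonal_mul_diagonal]
    convert diagonal_one using 2
    exact funext fun v => inv_mul_cancel₀ (hsne v)
  let e : (V → ℝ) ≃ₗ[ℝ] (V → ℝ) :=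
    LinearEquiv.ofLinear (Matrix.mulVecLin (Matrix.diagonal s))
      (Matrix.mulVecLin (Matrix.diagonal (fun v => (s v)⁻¹)))
      (by rw [← Matrix.mulVecLin_mul, hmul, Matrix.mulVecLin_one])
      (by rw [← Matrix.mulVecLin_mul, hmul', Matrix.mulVecLin_one])
  have key : Module.End.eigenspace (Matrix.mulVecLin (normAdj G)) 1 =
      Submodule.comap (e : (V → ℝ) →ₗ[ℝ] (V → ℝ))
        (LinearMap.ker (Matrix.toLin' (G.lapMatrix ℝ))) := by
    ext x
    rw [Module.End.mem_eigenspace_iff, one_smul, Submodule.mem_comap, LinearMap.mem_ker]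
    have he : (e : (V → ℝ) →ₗ[ℝ] (V → ℝ)) x = Matrix.diagonal s *ᵥ x := rfl
    rw [he, Matrix.toLin'_apply]
    set y : V → ℝ := Matrix.diagonal s *ᵥ x with hy
    have hMx : ∀ v, (Matrix.mulVecLin (normAdj G) x) v = s v * (G.adjMatrix ℝ *ᵥ y) v := by
      intro v
      simp only [normAdj, Matrix.mulVecLin_apply, ← Matrix.mulVec_mulVec, hy,
        Matrix.mulVec_diagonal, hs]
    have hLy : ∀ v, (G.lapMatrix ℝ *ᵥ y) v = (s v)⁻¹ * x v - (G.adjMatrix ℝ *ᵥ y) v := by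
      intro v
      rw [SimpleGraph.lapMatrix, Matrix.sub_mulVec, Pi.sub_apply]
      congr 1
      rw [SimpleGraph.degMatrix, Matrix.mulVec_diagonal, hy, Matrix.mulVec_diagonal,
        ← mul_assoc, hds]
    constructor
    · intro h
      funext v
      simp only [Pi.zero_apply]
      rw [hLy v, sub_eq_zero]
      have := congrFun h v
      rw [hMx v] at this
      rw [← this, ← mul_assoc, inv_mul_cancel₀ (hsne v), one_mul]
    · intro h
      funext v
      rw [hMx v]
      have := congrFun h v
      simp only [Pi.zero_apply] at this
      rw [hLy v, sub_eq_zero] at this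
      rw [← this, ← mul_assoc, mul_inv_cancel₀ (hsne v), one_mul]
  rw [key, Submodule.comap_equiv_eq_map_symm, LinearEquiv.finrank_map_eq,
    ← SimpleGraph.card_connectedComponent_eq_finrank_ker_toLin'_lapMatrix, Nat.card_eq_fintype_card]
end

section
/- Let M be a real symmetric matrix indexed by a finite type n with decidable equality such that every real eigenvalue μ of M satisfies -1 < μ ≤ 1. Then there exists a matrix P such that M^k converges entrywise to P as k → ∞, Pᵀ = P, P * P = P, M * P = P, and for every x : n → ℝ one has M *ᵥ x = x if and only if P *ᵥ x = x (i.e. the limit is the orthogonal projection onto the eigenspace of M for eigenvalue 1). -/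
open Matrix Filter

theorem stmt8 {n : Type} [Fintype n] [DecidableEq n] (M : Matrix n n ℝ)
    (hsymm : Mᵀ = M)
    (heig : ∀ (μ : ℝ) (x : n → ℝ), x ≠ 0 → M *ᵥ x = μ • x → -1 < μ ∧ μ ≤ 1) :
    ∃ P : Matrix n n ℝ,
      (∀ i j, Tendsto (fun k => (M ^ k) i j) atTop (nhds (P i j))) ∧
      Pᵀ = P ∧ P * P = P ∧ M * P = P ∧
      ∀ x : n → ℝ, M *ᵥ x = x ↔ P *ᵥ x = x := by
  have hM : M.IsHermitian := by
    rw [Matrix.IsHermitian, Matrix.conjTranspose]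
    ext i j
    simpa using congrFun (congrFun hsymm i) j
  set U : Matrix n n ℝ := (hM.eigenvectorUnitary : Matrix n n ℝ) with hUdef
  set μ : n → ℝ := hM.eigenvalues with hμdef
  have hbounds : ∀ i, -1 < μ i ∧ μ i ≤ 1 := fun i =>
    heig (μ i) _ (fun h => hM.eigenvectorBasis.orthonormal.ne_zero i
      (by simpa using congrArg (WithLp.toLp 2) h)) (hM.mulVec_eigenvectorBasis i)
  have hspec : M = U * diagonal μ * star U := by
    have := hM.spectral_theorem
    simpa [RCLike.ofReal_real_eq_id] using this
  have hUU : star U * U = 1 := Unitary.coe_star_mul_self hM.eigenvectorUnitary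
  have hUU' : U * star U = 1 := Unitary.coe_mul_star_self hM.eigenvectorUnitary
  set d : n → ℝ := fun i => if μ i = 1 then (1 : ℝ) else 0 with hddef
  set P : Matrix n n ℝ := U * diagonal d * star U with hPdef
  have hmul : ∀ e f : n → ℝ,
      (U * diagonal e * star U) * (U * diagonal f * star U)
        = U * diagonal (fun i => e i * f i) * star U := by
    intro e f
    calc U * diagonal e * star U * (U * diagonal f * star U)
        = U * (diagonal e * (star U * U) * diagonal f) * star U := by noncomm_ring
      _ = U * diagonal (fun i => e i * f i) * star U := by
          rw [hUU, mul_one, diagonal_mul_diagonal]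
  have hpow : ∀ k : ℕ, M ^ k = U * diagonal (fun i => μ i ^ k) * star U := by
    intro k
    induction k with
    | zero => simp [hUU']
    | succ k ih =>
      rw [pow_succ, ih, hspec, hmul]
      have he : (fun i => μ i ^ k * μ i) = fun i => μ i ^ (k + 1) :=
        funext fun i => (pow_succ _ _).symm
      rw [he]
  have hstarU : star U = Uᵀ := by
    ext i j
    simp [Matrix.star_apply]
  have hentry : ∀ (e : n → ℝ) (i j : n),
      (U * diagonal e * star U) i j = ∑ l, e l * (U i l * U j l) := by
    intro e i j
    rw [hstarU]
    simp only [Matrix.mul_apply, Matrix.transpose_apply, Matrix.diagonal_apply, mul_ite,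
      mul_zero, ite_mul, zero_mul, Finset.sum_ite_eq, Finset.sum_ite_eq', Finset.mem_univ, if_true]
    exact Finset.sum_congr rfl fun l _ => by ring
  have hconv : ∀ i j, Tendsto (fun k => (M ^ k) i j) atTop (nhds (P i j)) := by
    intro i j
    have hform : ∀ k : ℕ, (M ^ k) i j = ∑ l, μ l ^ k * (U i l * U j l) := fun k => by
      rw [hpow k, hentry]
    rw [hPdef, hentry]
    simp only [hform]
    apply tendsto_finset_sum
    intro l _
    apply Tendsto.mul_const
    by_cases h1 : μ l = 1
    · exact (tendsto_const_nhds (x := d l)).congr fun k => by simp [hddef, h1]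
    · have habs : |μ l| < 1 :=
        abs_lt.mpr ⟨(hbounds l).1, lt_of_le_of_ne (hbounds l).2 h1⟩
      have h0 : d l = 0 := by simp [hddef, h1]
      rw [h0]
      exact tendsto_pow_atTop_nhds_zero_iff.mpr habs
  have hμd : (fun i => μ i * d i) = d :=
    funext fun i => by by_cases h : μ i = 1 <;> simp [hddef, h]
  have hdd : (fun i => d i * d i) = d :=
    funext fun i => by by_cases h : μ i = 1 <;> simp [hddef, h]
  have hMP : M * P = P := by
    rw [hPdef, hspec, hmul, hμd]
  refine ⟨P, hconv, ?_, ?_, hMP, ?_⟩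
  · rw [hPdef, hstarU]
    rw [Matrix.transpose_mul, Matrix.transpose_mul, Matrix.transpose_transpose,
      Matrix.diagonal_transpose, mul_assoc]
  · rw [hPdef, hmul, hdd]
  · intro x
    constructor
    · intro hx
      have hk : ∀ k : ℕ, (M ^ k) *ᵥ x = x := by
        intro k
        induction k with
        | zero => simp
        | succ k ih => rw [pow_succ, ← Matrix.mulVec_mulVec, hx, ih]
      funext i
      have h1 : Tendsto (fun k => ((M ^ k) *ᵥ x) i) atTop (nhds ((P *ᵥ x) i)) := by
        simp only [Matrix.mulVec, dotProduct]
        exact tendsto_finset_sum _ fun l _ => (hconv i l).mul_const (x l)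
      have h2 : Tendsto (fun k => ((M ^ k) *ᵥ x) i) atTop (nhds (x i)) := by
        simp only [hk]
        exact tendsto_const_nhds
      exact tendsto_nhds_unique h1 h2
    · intro hx
      conv_lhs => rw [← hx]
      rw [Matrix.mulVec_mulVec, hMP, hx]
end

section
/- Let M₁ and M₂ be real symmetric matrices indexed by a finite type n with decidable equality such that every real eigenvalue of M₁ and every real eigenvalue of M₂ lies in the interval (-1, 1]. Suppose there exists x : n → ℝ with M₁ *ᵥ x = x and M₂ *ᵥ x ≠ x. Then for all matrices P₁ and P₂, if M₁^k converges entrywise to P₁ and M₂^k converges entrywise to P₂ as k → ∞, then P₁ ≠ P₂. -/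
open Matrix Filter
set_option maxHeartbeats 1000000

theorem stmt10 {n : Type} [Fintype n] [DecidableEq n] (M₁ M₂ : Matrix n n ℝ)
    (hsymm₁ : M₁ᵀ = M₁) (hsymm₂ : M₂ᵀ = M₂)
    (heig₁ : ∀ (μ : ℝ) (x : n → ℝ), x ≠ 0 → M₁ *ᵥ x = μ • x → -1 < μ ∧ μ ≤ 1)
    (heig₂ : ∀ (μ : ℝ) (x : n → ℝ), x ≠ 0 → M₂ *ᵥ x = μ • x → -1 < μ ∧ μ ≤ 1)
    (hx : ∃ x : n → ℝ, M₁ *ᵥ x = x ∧ M₂ *ᵥ x ≠ x) :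
    ∀ P₁ P₂ : Matrix n n ℝ,
      (∀ i j, Tendsto (fun k => (M₁ ^ k) i j) atTop (nhds (P₁ i j))) →
      (∀ i j, Tendsto (fun k => (M₂ ^ k) i j) atTop (nhds (P₂ i j))) →
      P₁ ≠ P₂ := by
  obtain ⟨x, hx1, hx2⟩ := hx
  intro P₁ P₂ h1 h2 hP
  subst hP
  -- M₁ ^ k *ᵥ x = x for all k
  have hpow : ∀ k, (M₁ ^ k) *ᵥ x = x := by
    intro k
    induction k with
    | zero => simp
    | succ k ih => rw [pow_succ', ← Matrix.mulVec_mulVec, ih, hx1]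
  -- P₁ *ᵥ x = x
  have hPx : P₁ *ᵥ x = x := by
    funext i
    have hlim : Tendsto (fun k => ((M₁ ^ k) *ᵥ x) i) atTop (nhds ((P₁ *ᵥ x) i)) := by
      simp only [Matrix.mulVec, dotProduct]
      exact tendsto_finset_sum _ fun j _ => (h1 i j).mul tendsto_const_nhds
    have hconst : Tendsto (fun k => ((M₁ ^ k) *ᵥ x) i) atTop (nhds (x i)) := by
      simp only [hpow]; exact tendsto_const_nhds
    exact tendsto_nhds_unique hlim hconst
  -- M₂ * P₁ = P₁
  have hMP : M₂ * P₁ = P₁ := by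
    ext i j
    have hlim : Tendsto (fun k => (M₂ ^ (k + 1)) i j) atTop (nhds ((M₂ * P₁) i j)) := by
      have : ∀ k, (M₂ ^ (k + 1)) i j = ∑ l, M₂ i l * (M₂ ^ k) l j := by
        intro k; rw [pow_succ']; rfl
      simp only [this, Matrix.mul_apply]
      exact tendsto_finset_sum _ fun l _ => tendsto_const_nhds.mul (h2 l j)
    have hlim2 : Tendsto (fun k => (M₂ ^ (k + 1)) i j) atTop (nhds (P₁ i j)) :=
      (h2 i j).comp (tendsto_add_atTop_nat 1)
    exact tendsto_nhds_unique hlim hlim2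
  apply hx2
  calc M₂ *ᵥ x = M₂ *ᵥ (P₁ *ᵥ x) := by rw [hPx]
    _ = (M₂ * P₁) *ᵥ x := Matrix.mulVec_mulVec _ _ _
    _ = x := by rw [hMP, hPx]
end

section
/- Let G be a finite simple graph on a finite vertex type V with decidable adjacency and let n be the cardinality of V. Then the WL coloring stabilizes by iteration n: for every t ≥ n and all vertices u, v one has wl G t u = wl G t v if and only if wl G n u = wl G n v. -/
/-- The type of 1-WL colors at iteration `t`. -/
def WLColor : ℕ → Type
  | 0 => Unit
  | t + 1 => WLColor t × Multiset (WLColor t)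

/-- The 1-WL (color refinement) coloring of a graph at iteration `t`. -/
def wl {V : Type} [Fintype V] [DecidableEq V] (G : SimpleGraph V) [DecidableRel G.Adj] :
    (t : ℕ) → V → WLColor t
  | 0 => fun _ => ()
  | t + 1 => fun v => (wl G t v, (G.neighborFinset v).val.map (wl G t))

/-- The WL signature of `G` at iteration `t`: the multiset of WL colors of all vertices. -/
def wlSig {V : Type} [Fintype V] [DecidableEq V] (G : SimpleGraph V) [DecidableRel G.Adj]
    (t : ℕ) : Multiset (WLColor t) :=
  Finset.univ.val.map (wl G t)

instance instDecEqWLColor : ∀ t, DecidableEq (WLColor t)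
  | 0 => inferInstanceAs (DecidableEq Unit)
  | t + 1 =>
    haveI := instDecEqWLColor t
    inferInstanceAs (DecidableEq (WLColor t × Multiset (WLColor t)))

/-- characterization of map equality via countP -/
lemma map_eq_map_iff_countP {α β : Type} [DecidableEq β] (f : α → β) (M N : Multiset α) :
    M.map f = N.map f ↔
      ∀ a : α, M.countP (fun x => f x = f a) = N.countP (fun x => f x = f a) := by
  classical
  constructor
  · intro h a
    have := congrArg (Multiset.count (f a)) h
    rw [Multiset.count_map, Multiset.count_map] at this
    rw [Multiset.countP_eq_card_filter, Multiset.countP_eq_card_filter,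
      Multiset.filter_congr (fun x _ => (eq_comm : f x = f a ↔ f a = f x)),
      Multiset.filter_congr (s := N) (fun x _ => (eq_comm : f x = f a ↔ f a = f x))]
    exact this
  · intro h
    ext b
    rw [Multiset.count_map, Multiset.count_map]
    by_cases hb : ∃ a : α, f a = b
    · obtain ⟨a, rfl⟩ := hb
      have := h a
      rw [Multiset.countP_eq_card_filter, Multiset.countP_eq_card_filter] at this
      rw [Multiset.filter_congr (fun x _ => (eq_comm : f a = f x ↔ f x = f a)),
        Multiset.filter_congr (s := N) (fun x _ => (eq_comm : f a = f x ↔ f x = f a))]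
      exact this
    · push_neg at hb
      rw [Multiset.filter_eq_nil.2 (fun a _ => fun hc => hb a hc.symm),
        Multiset.filter_eq_nil.2 (fun a _ => fun hc => hb a hc.symm)]

lemma map_eq_map_of_ker {α β γ : Type} [DecidableEq β] [DecidableEq γ]
    (f : α → β) (g : α → γ) (h : ∀ u v, f u = f v ↔ g u = g v) (M N : Multiset α) :
    M.map f = N.map f ↔ M.map g = N.map g := by
  rw [map_eq_map_iff_countP, map_eq_map_iff_countP]
  constructor <;> intro H a
  · rw [← Multiset.countP_congr rfl (fun x _ => propext (h x a)),
      ← Multiset.countP_congr rfl (fun x _ => propext (h x a))]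
    exact H a
  · rw [Multiset.countP_congr rfl (fun x _ => propext (h x a)),
      Multiset.countP_congr rfl (fun x _ => propext (h x a))]
    exact H a

section Graph
variable {V : Type} [Fintype V] [DecidableEq V] (G : SimpleGraph V) [DecidableRel G.Adj]

/-- first component of a WL color -/
def wlHead {t : ℕ} (c : WLColor (t + 1)) : WLColor t :=
  (c : WLColor t × Multiset (WLColor t)).1

lemma wl_succ (t : ℕ) (v : V) :
    wl G (t + 1) v = (wl G t v, (G.neighborFinset v).val.map (wl G t)) := rfl

lemma wl_succ_eq_iff (t : ℕ) (u v : V) :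
    wl G (t + 1) u = wl G (t + 1) v ↔
      wl G t u = wl G t v ∧
        (G.neighborFinset u).val.map (wl G t) = (G.neighborFinset v).val.map (wl G t) := by
  rw [wl_succ, wl_succ]
  exact Prod.ext_iff

/-- one refinement step preserves kernel equality -/
lemma ker_step {t s : ℕ} (h : ∀ u v : V, wl G t u = wl G t v ↔ wl G s u = wl G s v) :
    ∀ u v : V, wl G (t + 1) u = wl G (t + 1) v ↔ wl G (s + 1) u = wl G (s + 1) v := by
  intro u v
  rw [wl_succ_eq_iff, wl_succ_eq_iff, h u v,
    map_eq_map_of_ker (wl G t) (wl G s) h]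

lemma ker_stable {t : ℕ}
    (h : ∀ u v : V, wl G t u = wl G t v ↔ wl G (t + 1) u = wl G (t + 1) v) :
    ∀ s, t ≤ s → ∀ u v : V, wl G s u = wl G s v ↔ wl G t u = wl G t v := by
  intro s hs
  induction s with
  | zero => have : t = 0 := Nat.le_zero.1 hs; subst this; intro u v; rfl
  | succ n ih =>
    rcases Nat.lt_or_ge t (n + 1) with hlt | hge
    · have hn : t ≤ n := Nat.lt_succ_iff.1 hlt
      have ihn := ih hn
      intro u v
      have step := ker_step G (t := n) (s := t) (fun u v => ihn u v) u v
      rw [step]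
      exact (h u v).symm
    · have : t = n + 1 := le_antisymm hs hge
      subst this; intro u v; rfl

/-- the number of colors at step t -/
noncomputable def cNum (t : ℕ) : ℕ := (Finset.univ.image (wl G t)).card

lemma image_fst (t : ℕ) :
    Finset.univ.image (wl G t) = (Finset.univ.image (wl G (t + 1))).image wlHead := by
  rw [Finset.image_image]
  rfl

lemma cNum_mono (t : ℕ) : cNum G t ≤ cNum G (t + 1) := by
  rw [cNum, cNum, image_fst]
  exact Finset.card_image_le

lemma ker_of_cNum_eq {t : ℕ} (h : cNum G t = cNum G (t + 1)) :
    ∀ u v : V, wl G t u = wl G t v ↔ wl G (t + 1) u = wl G (t + 1) v := by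
  have hinj : Set.InjOn wlHead (↑(Finset.univ.image (wl G (t + 1))) : Set (WLColor (t + 1))) := by
    apply Finset.injOn_of_card_image_eq
    rw [← image_fst]
    exact h
  intro u v
  constructor
  · intro huv
    exact hinj (Finset.mem_coe.2 (Finset.mem_image_of_mem _ (Finset.mem_univ u)))
      (Finset.mem_coe.2 (Finset.mem_image_of_mem _ (Finset.mem_univ v))) huv
  · intro huv
    exact congrArg wlHead huv

lemma cNum_le_card (t : ℕ) : cNum G t ≤ Fintype.card V :=
  le_trans Finset.card_image_le (le_of_eq (Finset.card_univ))

lemma cNum_strict (hne : Nonempty V)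
    (h : ∀ t < Fintype.card V, cNum G t ≠ cNum G (t + 1)) :
    ∀ k ≤ Fintype.card V, k + 1 ≤ cNum G k := by
  intro k hk
  induction k with
  | zero =>
    have : (Finset.univ.image (wl G 0)).Nonempty :=
      (Finset.univ_nonempty (α := V)).image _
    simp only [cNum, Nat.zero_add]
    exact Finset.card_pos.2 this
  | succ n ih =>
    have hn := ih (le_of_lt (Nat.lt_of_succ_le hk))
    have hlt : cNum G n < cNum G (n + 1) :=
      lt_of_le_of_ne (cNum_mono G n) (h n (Nat.lt_of_succ_le hk))
    omega

end Graph

theorem stmt14 {V : Type} [Fintype V] [DecidableEq V]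
    (G : SimpleGraph V) [DecidableRel G.Adj] :
    ∀ t, Fintype.card V ≤ t → ∀ u v : V,
      wl G t u = wl G t v ↔ wl G (Fintype.card V) u = wl G (Fintype.card V) v := by
  intro t ht u v
  have hne : Nonempty V := ⟨u⟩
  -- find a stabilization point
  have hex : ∃ s < Fintype.card V, cNum G s = cNum G (s + 1) := by
    by_contra hc
    push_neg at hc
    have := cNum_strict G hne hc (Fintype.card V) le_rfl
    have := cNum_le_card G (Fintype.card V)
    omega
  obtain ⟨s, hs, hcs⟩ := hex
  have hker := ker_of_cNum_eq G hcs
  have hstab := ker_stable G hker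
  have h1 := hstab t (le_trans (le_of_lt hs) ht) u v
  have h2 := hstab (Fintype.card V) (le_of_lt hs) u v
  rw [h1, h2]
end

section
/- Let G₁ and G₂ be finite simple graphs on finite vertex types V₁ and V₂ (each with decidable adjacency). Then for every message-passing scheme (X, x₀, f), every iteration t, and all vertices u of G₁ and v of G₂: if wl G₁ t u = wl G₂ t v, then feat G₁ t u = feat G₂ t v. That is, the feature computed by any message-passing scheme at layer t is determined by the 1-WL color at iteration t. -/
/-- A message-passing scheme: a family of feature types, an initial feature, and
update functions combining a node feature with the multiset of its neighbors features. -/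
structure MPScheme where
  X : ℕ → Type
  x₀ : X 0
  f : (t : ℕ) → X t → Multiset (X t) → X (t + 1)

/-- The features computed by a message-passing scheme on a graph. -/
def MPScheme.feat (S : MPScheme) {V : Type} [Fintype V] [DecidableEq V]
    (G : SimpleGraph V) [DecidableRel G.Adj] : (t : ℕ) → V → S.X t
  | 0 => fun _ => S.x₀
  | t + 1 => fun v => S.f t (S.feat G t v) ((G.neighborFinset v).val.map (S.feat G t))

lemma map_eq_of_rel {α β γ δ : Type*} [DecidableEq β] {f : α → γ} {g : β → γ} {F : α → δ} {G : β → δ}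
    (h : ∀ a b, f a = g b → F a = G b) :
    ∀ (s : Multiset α) (t : Multiset β), s.map f = t.map g → s.map F = t.map G := by
  intro s
  induction s using Multiset.induction with
  | empty =>
    intro t ht
    simp only [Multiset.map_zero] at ht ⊢
    obtain rfl := Multiset.map_eq_zero.mp ht.symm
    simp
  | cons a s ih =>
    intro t ht
    have hmem : f a ∈ t.map g := by
      rw [← ht]; simp
    obtain ⟨b, hb, hgb⟩ := Multiset.mem_map.mp hmem
    have ht' : t = b ::ₘ t.erase b := (Multiset.cons_erase hb).symm
    rw [ht'] at ht ⊢
    simp only [Multiset.map_cons] at ht ⊢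
    rw [hgb] at ht
    have := (Multiset.cons_inj_right _).mp ht
    rw [h a b hgb.symm, ih _ this]

theorem stmt16 {V₁ V₂ : Type} [Fintype V₁] [DecidableEq V₁] [Fintype V₂] [DecidableEq V₂]
    (G₁ : SimpleGraph V₁) [DecidableRel G₁.Adj] (G₂ : SimpleGraph V₂) [DecidableRel G₂.Adj]
    (S : MPScheme) (t : ℕ) (u : V₁) (v : V₂)
    (h : wl G₁ t u = wl G₂ t v) :
    S.feat G₁ t u = S.feat G₂ t v := by
  induction t generalizing u v with
  | zero => rfl
  | succ t ih =>
    simp only [wl] at h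
    have h1 := congrArg Prod.fst h
    have h2 := congrArg Prod.snd h
    simp only at h1 h2
    simp only [MPScheme.feat]
    rw [ih u v h1, map_eq_of_rel ih _ _ h2]
end

section
/- Let G₁ and G₂ be finite simple graphs on finite vertex types V₁ and V₂ (each with decidable adjacency), and let t be an iteration such that the WL signatures of G₁ and G₂ at iteration t are equal. Then for every message-passing scheme (X, x₀, f), the multiset of feat G₁ t v over all vertices v of G₁ equals the multiset of feat G₂ t v over all vertices v of G₂. -/
/-- Decode a WL color into a message-passing feature. -/
def MPScheme.ofColor (S : MPScheme) : (t : ℕ) → WLColor t → S.X t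
  | 0 => fun _ => S.x₀
  | t + 1 => fun c => S.f t (S.ofColor t c.1) (c.2.map (S.ofColor t))

theorem MPScheme.feat_eq {V : Type} [Fintype V] [DecidableEq V]
    (G : SimpleGraph V) [DecidableRel G.Adj] (S : MPScheme) :
    ∀ t v, S.feat G t v = S.ofColor t (wl G t v)
  | 0, v => rfl
  | t + 1, v => by
    simp only [MPScheme.feat, wl, MPScheme.ofColor, Multiset.map_map]
    congr 1
    · exact S.feat_eq G t v
    · exact Multiset.map_congr rfl (fun u _ => S.feat_eq G t u)

theorem stmt17 {V₁ V₂ : Type} [Fintype V₁] [DecidableEq V₁] [Fintype V₂] [DecidableEq V₂]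
    (G₁ : SimpleGraph V₁) [DecidableRel G₁.Adj] (G₂ : SimpleGraph V₂) [DecidableRel G₂.Adj]
    (t : ℕ) (h : wlSig G₁ t = wlSig G₂ t) (S : MPScheme) :
    Finset.univ.val.map (S.feat G₁ t) = Finset.univ.val.map (S.feat G₂ t) := by
  calc Finset.univ.val.map (S.feat G₁ t)
      = (wlSig G₁ t).map (S.ofColor t) := by
        simp [wlSig, Multiset.map_map, Function.comp, S.feat_eq G₁, S.feat_eq G₂]
    _ = (wlSig G₂ t).map (S.ofColor t) := by rw [h]
    _ = Finset.univ.val.map (S.feat G₂ t) := by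
        simp [wlSig, Multiset.map_map, Function.comp, S.feat_eq G₁, S.feat_eq G₂]
end

section
/- Let G₁ and G₂ be finite simple graphs on finite vertex types V₁ and V₂ (each with decidable adjacency), and let k be a natural number such that the WL signatures of G₁ and G₂ are equal at every iteration l < k and differ at iteration k (i.e. the 1-WL test first distinguishes G₁ and G₂ at the k-th iteration). Then: (i) for every l < k, every message-passing scheme (X, x₀, f), and every readout function R : Multiset (X l) → Y, applying R to the multiset of layer-l features of G₁ yields the same value as applying R to the multiset of layer-l features of G₂; and (ii) for every L ≥ k there exist a message-passing scheme (X, x₀, f) and a readout function R : Multiset (X L) → Y such that R applied to the multiset of layer-L features of G₁ differs from R applied to the multiset of layer-L features of G₂. -/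
/-- Translate a WL color into a feature of a message-passing scheme. -/
def wlToX (S : MPScheme) : (t : ℕ) → WLColor t → S.X t
  | 0, _ => S.x₀
  | t + 1, c => S.f t (wlToX S t c.1) (c.2.map (wlToX S t))

lemma feat_eq_wlToX (S : MPScheme) {V : Type} [Fintype V] [DecidableEq V]
    (G : SimpleGraph V) [DecidableRel G.Adj] :
    ∀ t v, S.feat G t v = wlToX S t (wl G t v) := by
  intro t
  induction t with
  | zero => intro v; rfl
  | succ t ih =>
    intro v
    show S.f t (S.feat G t v) ((G.neighborFinset v).val.map (S.feat G t)) = _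
    show _ = S.f t (wlToX S t (wl G t v))
      (((G.neighborFinset v).val.map (wl G t)).map (wlToX S t))
    rw [Multiset.map_map, ih]
    congr 1
    exact Multiset.map_congr rfl (fun u _ => ih u)

lemma wlSig_fst {V : Type} [Fintype V] [DecidableEq V]
    (G : SimpleGraph V) [DecidableRel G.Adj] (t : ℕ) :
    (wlSig G (t + 1)).map (fun c : WLColor (t + 1) => c.1) = wlSig G t := by
  simp only [wlSig, Multiset.map_map]
  rfl

lemma wlSig_eq_of_le {V₁ V₂ : Type} [Fintype V₁] [DecidableEq V₁] [Fintype V₂] [DecidableEq V₂]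
    (G₁ : SimpleGraph V₁) [DecidableRel G₁.Adj] (G₂ : SimpleGraph V₂) [DecidableRel G₂.Adj]
    {k L : ℕ} (hkL : k ≤ L) (h : wlSig G₁ L = wlSig G₂ L) : wlSig G₁ k = wlSig G₂ k := by
  induction L with
  | zero => obtain rfl : k = 0 := Nat.le_zero.mp hkL; exact h
  | succ L ih =>
    rcases Nat.eq_or_lt_of_le hkL with rfl | hlt
    · exact h
    · exact ih (Nat.lt_succ_iff.mp hlt)
        (by rw [← wlSig_fst G₁ L, ← wlSig_fst G₂ L, h])

theorem stmt18 {V₁ V₂ : Type} [Fintype V₁] [DecidableEq V₁] [Fintype V₂] [DecidableEq V₂]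
    (G₁ : SimpleGraph V₁) [DecidableRel G₁.Adj] (G₂ : SimpleGraph V₂) [DecidableRel G₂.Adj]
    (k : ℕ)
    (hlt : ∀ l < k, wlSig G₁ l = wlSig G₂ l)
    (hk : wlSig G₁ k ≠ wlSig G₂ k) :
    (∀ l < k, ∀ (S : MPScheme) (Y : Type) (R : Multiset (S.X l) → Y),
      R (Finset.univ.val.map (S.feat G₁ l)) = R (Finset.univ.val.map (S.feat G₂ l))) ∧
    (∀ L, k ≤ L → ∃ (S : MPScheme) (Y : Type) (R : Multiset (S.X L) → Y),
      R (Finset.univ.val.map (S.feat G₁ L)) ≠ R (Finset.univ.val.map (S.feat G₂ L))) := by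
  constructor
  · intro l hl S Y R
    have h1 : Finset.univ.val.map (S.feat G₁ l) = (wlSig G₁ l).map (wlToX S l) := by
      simp only [wlSig, Multiset.map_map]
      exact Multiset.map_congr rfl (fun v _ => feat_eq_wlToX S G₁ l v)
    have h2 : Finset.univ.val.map (S.feat G₂ l) = (wlSig G₂ l).map (wlToX S l) := by
      simp only [wlSig, Multiset.map_map]
      exact Multiset.map_congr rfl (fun v _ => feat_eq_wlToX S G₂ l v)
    rw [h1, h2, hlt l hl]
  · intro L hL
    refine ⟨⟨WLColor, (), fun t c m => (c, m)⟩, Multiset (WLColor L), id, ?_⟩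
    have hf : ∀ {V : Type} [Fintype V] [DecidableEq V] (G : SimpleGraph V)
        [DecidableRel G.Adj] (t : ℕ) (v : V),
        MPScheme.feat ⟨WLColor, (), fun t c m => (c, m)⟩ G t v = wl G t v := by
      intro V _ _ G _ t
      induction t with
      | zero => intro v; rfl
      | succ t ih =>
        intro v
        have hm : (G.neighborFinset v).val.map (MPScheme.feat ⟨WLColor, (), fun t c m => (c, m)⟩ G t)
            = (G.neighborFinset v).val.map (wl G t) :=
          Multiset.map_congr rfl (fun u _ => ih u)
        show ((MPScheme.feat ⟨WLColor, (), fun t c m => (c, m)⟩ G t v : WLColor t),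
          (G.neighborFinset v).val.map (MPScheme.feat ⟨WLColor, (), fun t c m => (c, m)⟩ G t))
          = wl G (t + 1) v
        rw [ih v, hm]
        rfl
    simp only [id]
    have e1 : Finset.univ.val.map (MPScheme.feat ⟨WLColor, (), fun t c m => (c, m)⟩ G₁ L)
        = wlSig G₁ L := Multiset.map_congr rfl (fun v _ => hf G₁ L v)
    have e2 : Finset.univ.val.map (MPScheme.feat ⟨WLColor, (), fun t c m => (c, m)⟩ G₂ L)
        = wlSig G₂ L := Multiset.map_congr rfl (fun v _ => hf G₂ L v)
    rw [e1, e2]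
    exact fun h => hk (wlSig_eq_of_le G₁ G₂ hL h)
end
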